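/- For δ ∈ (0,1) set kᶜ(δ) := k₊(1−δ) = √((2+√(1+3δ))/3), let μᵗ(δ) be the unique μ > −1 with −2(1 + μ + √(1+μ)) + G(kᶜ(δ); 1−δ) = 0, and set uᵗ(δ) := 1 + √(1+μᵗ(δ)). Then, as δ → 0⁺: (kᶜ(δ) − 1)/δ → 1/4, (μᵗ(δ) + 1)/δ² → 1/4, (uᵗ(δ) − 1)/δ → 1/2, and F_u(uᵗ(δ); μᵗ(δ))/δ → −1. (That is, kᶜ = 1 + δ/4 + o(δ), μᵗ = −1 + δ²/4 + o(δ²), uᵗ = 1 + δ/2 + o(δ), and F_u(uᵗ;μᵗ) = −δ + o(δ).) -/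

import Mathlib

open Filter Topology

/-- F_u(u;μ) = μ + 4u − 3u². -/
noncomputable def Fu (u μ : ℝ) : ℝ := μ + 4 * u - 3 * u ^ 2

/-- G(k;ν) = −νk² + 2k⁴ − k⁶. -/
noncomputable def G (k ν : ℝ) : ℝ := -ν * k ^ 2 + 2 * k ^ 4 - k ^ 6

/-- kᶜ(δ) = k₊(1−δ) = √((2+√(1+3δ))/3). -/
noncomputable def kc (δ : ℝ) : ℝ := Real.sqrt ((2 + Real.sqrt (1 + 3 * δ)) / 3)

noncomputable def Hfun (δ : ℝ) : ℝ := G (kc δ) (1 - δ)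

noncomputable def Phi (δ : ℝ) : ℝ := (Real.sqrt (1 + 2 * Hfun δ) - 1) / 2

lemma kc_zero : kc 0 = 1 := by
  have : (1:ℝ) + 3 * 0 = 1 := by norm_num
  rw [kc, this, Real.sqrt_one]
  norm_num [Real.sqrt_one]

lemma hasDerivAt_kc : HasDerivAt kc (1/4) 0 := by
  have h1 : HasDerivAt (fun δ : ℝ => 1 + 3 * δ) 3 0 := by
    simpa using ((hasDerivAt_id (0:ℝ)).const_mul 3).const_add 1
  have hs1 : HasDerivAt Real.sqrt (1 / (2 * Real.sqrt (1 + 3 * 0))) (1 + 3 * 0) :=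
    Real.hasDerivAt_sqrt (by norm_num)
  have hr : HasDerivAt (fun δ : ℝ => Real.sqrt (1 + 3 * δ)) (3/2) 0 := by
    have := hs1.comp 0 h1
    norm_num [Real.sqrt_one] at this
    exact this.congr_deriv (by norm_num)
  have hq : HasDerivAt (fun δ : ℝ => (2 + Real.sqrt (1 + 3 * δ)) / 3) (1/2) 0 := by
    have := (hr.const_add 2).div_const 3
    exact this.congr_deriv (by norm_num)
  have hs2 : HasDerivAt Real.sqrt
      (1 / (2 * Real.sqrt ((2 + Real.sqrt (1 + 3 * 0)) / 3))) ((2 + Real.sqrt (1 + 3 * 0)) / 3) :=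
    Real.hasDerivAt_sqrt (by norm_num [Real.sqrt_one])
  have := hs2.comp 0 hq
  norm_num [Real.sqrt_one] at this
  exact this.congr_deriv (by norm_num)

lemma Hfun_zero : Hfun 0 = 0 := by
  rw [Hfun, G, kc_zero]; norm_num

lemma hasDerivAt_Hfun : HasDerivAt Hfun 1 0 := by
  have hkc := hasDerivAt_kc
  have hν : HasDerivAt (fun δ : ℝ => -(1 - δ)) 1 0 := by
    have h := (hasDerivAt_id (0:ℝ)).sub_const 1
    rw [show (fun δ : ℝ => -(1 - δ)) = fun δ : ℝ => id δ - 1 from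
      funext fun δ => by simp only [id]; ring]; exact h
  have h2 : HasDerivAt (fun δ : ℝ => kc δ ^ 2) (1/2) 0 := by
    have := hkc.pow 2
    norm_num [kc_zero] at this
    exact this.congr_deriv (by norm_num)
  have h4 : HasDerivAt (fun δ : ℝ => 2 * kc δ ^ 4) 2 0 := by
    have := (hkc.pow 4).const_mul 2
    norm_num [kc_zero] at this
    convert this using 1 <;> norm_num
  have h6 : HasDerivAt (fun δ : ℝ => kc δ ^ 6) (3/2) 0 := by
    have := hkc.pow 6
    norm_num [kc_zero] at this
    exact this.congr_deriv (by norm_num)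
  have hprod : HasDerivAt (fun δ : ℝ => -(1 - δ) * kc δ ^ 2)
      (1 * kc 0 ^ 2 + -(1 - 0) * (1/2)) 0 := hν.mul h2
  have hh : HasDerivAt (fun δ : ℝ => -(1 - δ) * kc δ ^ 2 + 2 * kc δ ^ 4 - kc δ ^ 6)
      ((1 * kc 0 ^ 2 + -(1 - 0) * (1/2)) + 2 - 3/2) 0 := (hprod.add h4).sub h6
  have h' : HasDerivAt Hfun ((1 * kc 0 ^ 2 + -(1 - 0) * (1/2)) + 2 - 3/2) 0 := hh
  convert h' using 1
  rw [kc_zero]; norm_num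

lemma Phi_zero : Phi 0 = 0 := by
  simp [Phi, Hfun_zero, Real.sqrt_one]

lemma hasDerivAt_Phi : HasDerivAt Phi (1/2) 0 := by
  have h1 : HasDerivAt (fun δ : ℝ => 1 + 2 * Hfun δ) 2 0 := by
    simpa using (hasDerivAt_Hfun.const_mul 2).const_add 1
  have hs : HasDerivAt Real.sqrt (1 / (2 * Real.sqrt (1 + 2 * Hfun 0))) (1 + 2 * Hfun 0) :=
    Real.hasDerivAt_sqrt (by norm_num [Hfun_zero])
  have h2 := hs.comp 0 h1
  have h3 : HasDerivAt (fun δ : ℝ => Real.sqrt (1 + 2 * Hfun δ)) 1 0 := by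
    exact h2.congr_deriv (by norm_num [Hfun_zero, Real.sqrt_one])
  have := (h3.sub_const 1).div_const 2
  exact this.congr_deriv (by norm_num)

/-- with μᵗ(δ) the unique μ > −1 such that
−2(1 + μ + √(1+μ)) + G(kᶜ(δ);1−δ) = 0 and uᵗ(δ) = 1 + √(1+μᵗ(δ)), as δ → 0⁺:
(kᶜ−1)/δ → 1/4, (μᵗ+1)/δ² → 1/4, (uᵗ−1)/δ → 1/2, F_u(uᵗ;μᵗ)/δ → −1. -/
theorem turing_point_asymptotics (μt : ℝ → ℝ)
    (hμt : ∀ δ : ℝ, 0 < δ → δ < 1 →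
      -1 < μt δ ∧
      -2 * (1 + μt δ + Real.sqrt (1 + μt δ)) + G (kc δ) (1 - δ) = 0)
    (ut : ℝ → ℝ) (hut : ∀ δ : ℝ, ut δ = 1 + Real.sqrt (1 + μt δ)) :
    Tendsto (fun δ => (kc δ - 1) / δ) (𝓝[>] 0) (𝓝 (1 / 4)) ∧
    Tendsto (fun δ => (μt δ + 1) / δ ^ 2) (𝓝[>] 0) (𝓝 (1 / 4)) ∧
    Tendsto (fun δ => (ut δ - 1) / δ) (𝓝[>] 0) (𝓝 (1 / 2)) ∧
    Tendsto (fun δ => Fu (ut δ) (μt δ) / δ) (𝓝[>] 0) (𝓝 (-1)) := by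
  have hmono : 𝓝[>] (0:ℝ) ≤ 𝓝[≠] (0:ℝ) :=
    nhdsWithin_mono 0 (fun x hx => ne_of_gt hx)
  -- key identity: for 0 < δ < 1, √(1+μt δ) = Phi δ
  have key : ∀ δ : ℝ, 0 < δ → δ < 1 → Real.sqrt (1 + μt δ) = Phi δ := by
    intro δ hδ hδ'
    obtain ⟨h1, h2⟩ := hμt δ hδ hδ'
    set s := Real.sqrt (1 + μt δ) with hs_def
    have hs : 0 ≤ s := Real.sqrt_nonneg _
    have hs2 : s ^ 2 = 1 + μt δ := Real.sq_sqrt (by linarith)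
    have hG : G (kc δ) (1 - δ) = Hfun δ := rfl
    rw [hG] at h2
    have he : Hfun δ = 2 * s ^ 2 + 2 * s := by linarith [hs2]
    have hsq : Real.sqrt (1 + 2 * Hfun δ) = 2 * s + 1 := by
      rw [show 1 + 2 * Hfun δ = (2 * s + 1) ^ 2 by rw [he]; ring]
      exact Real.sqrt_sq (by linarith)
    simp only [Phi, hsq]
    ring
  -- eventually 0 < δ < 1
  have hev : ∀ᶠ δ in 𝓝[>] (0:ℝ), 0 < δ ∧ δ < 1 := by
    filter_upwards [self_mem_nhdsWithin,
      eventually_nhdsWithin_of_eventually_nhds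
        (Filter.Tendsto.eventually_lt_const (by norm_num : (0:ℝ) < 1) Filter.tendsto_id)]
      with δ h1 h2
    exact ⟨h1, h2⟩
  -- slope limits
  have hkc_slope : Tendsto (fun δ => (kc δ - 1) / δ) (𝓝[>] 0) (𝓝 (1/4)) := by
    have := (hasDerivAt_iff_tendsto_slope.mp hasDerivAt_kc).mono_left hmono
    refine this.congr (fun δ => ?_)
    simp [slope, kc_zero, div_eq_inv_mul]
  have hΦ_slope : Tendsto (fun δ => Phi δ / δ) (𝓝[>] 0) (𝓝 (1/2)) := by
    have := (hasDerivAt_iff_tendsto_slope.mp hasDerivAt_Phi).mono_left hmono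
    refine this.congr (fun δ => ?_)
    simp [slope, Phi_zero, div_eq_inv_mul]
  have hΦ_zero : Tendsto Phi (𝓝[>] 0) (𝓝 0) := by
    have := hasDerivAt_Phi.continuousAt.tendsto
    rw [Phi_zero] at this
    exact this.mono_left nhdsWithin_le_nhds
  refine ⟨hkc_slope, ?_, ?_, ?_⟩
  · -- (μt + 1)/δ² → 1/4
    have hlim : Tendsto (fun δ => (Phi δ / δ) ^ 2) (𝓝[>] 0) (𝓝 ((1/2) ^ 2)) :=
      hΦ_slope.pow 2
    have : Tendsto (fun δ => (Phi δ / δ) ^ 2) (𝓝[>] 0) (𝓝 (1/4)) := by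
      convert hlim using 2 <;> norm_num
    refine this.congr' ?_
    filter_upwards [hev] with δ ⟨hδ, hδ'⟩
    have hμ := (hμt δ hδ hδ').1
    have hΦ := key δ hδ hδ'
    have hs2 : Real.sqrt (1 + μt δ) ^ 2 = 1 + μt δ := Real.sq_sqrt (by linarith)
    rw [hΦ] at hs2
    rw [div_pow, hs2]
    ring_nf
  · -- (ut - 1)/δ → 1/2
    refine hΦ_slope.congr' ?_
    filter_upwards [hev] with δ ⟨hδ, hδ'⟩
    rw [hut δ, key δ hδ hδ']
    ring_nf
  · -- Fu/δ → -1
    have hlim : Tendsto (fun δ => -2 * (Phi δ / δ * Phi δ) + -2 * (Phi δ / δ))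
        (𝓝[>] 0) (𝓝 (-2 * (1/2 * 0) + -2 * (1/2))) :=
      ((hΦ_slope.mul hΦ_zero).const_mul (-2)).add (hΦ_slope.const_mul (-2))
    have hlim' : Tendsto (fun δ => -2 * (Phi δ / δ * Phi δ) + -2 * (Phi δ / δ))
        (𝓝[>] 0) (𝓝 (-1)) := by
      convert hlim using 2 <;> norm_num
    refine hlim'.congr' ?_
    filter_upwards [hev] with δ ⟨hδ, hδ'⟩
    have hμ := (hμt δ hδ hδ').1
    have hΦ := key δ hδ hδ'
    have hs2 : Real.sqrt (1 + μt δ) ^ 2 = 1 + μt δ := Real.sq_sqrt (by linarith)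
    rw [hΦ] at hs2
    have hu : ut δ = 1 + Phi δ := by rw [hut δ, hΦ]
    have hμeq : μt δ = Phi δ ^ 2 - 1 := by linarith [hs2]
    rw [eq_comm]
    rw [Fu, hu, hμeq]
    field_simp
    ring
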